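/- A nonzero element y of a differential field extension of K satisfies the linear differential equation y^{(n)} + a_1 y^{(n-1)} + … + a_n y = 0 (with a_i ∈ K) if and only if its logarithmic derivative u = y'/y satisfies the generalized Riccati equation D_n(u) + a_1 D_{n-1}(u) + … + a_n D_0(u) = 0. -/

import Mathlib

open MvPolynomial

/-- The derivation `δ` on differential polynomials in `u, u', u'', …`. -/
noncomputable def diffDer : Derivation ℤ (MvPolynomial ℕ ℤ) (MvPolynomial ℕ ℤ) :=
  MvPolynomial.mkDerivation ℤ (fun i => X (i + 1))

/-- The polynomials `D_n`: `D_0 = 1`, `D_{k+1} = (D_k)' + u·D_k`. -/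
noncomputable def Dpoly : ℕ → MvPolynomial ℕ ℤ
  | 0 => 1
  | k + 1 => diffDer (Dpoly k) + X 0 * Dpoly k

lemma diffDer_X (i : ℕ) : diffDer (X i) = X (i + 1) := by
  simp [diffDer, mkDerivation_X]

section aux
variable {F : Type*} [Field F] (dF : F → F)
    (hadd : ∀ a b, dF (a + b) = dF a + dF b)
    (hmul : ∀ a b, dF (a * b) = dF a * b + a * dF b)

include hadd hmul

lemma dF_zero : dF 0 = 0 := by
  have := hadd 0 0; simp at this; exact this

lemma dF_one : dF 1 = 0 := by
  have := hmul 1 1; simp at this; exact this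

lemma dF_intCast (m : ℤ) : dF (m : F) = 0 := by
  have hneg : ∀ x : F, dF (-x) = -dF x := by
    intro x
    have h := hadd x (-x)
    simp [dF_zero dF hadd hmul] at h
    linear_combination -h
  have hnat : ∀ k : ℕ, dF (k : F) = 0 := by
    intro k
    induction k with
    | zero => simpa using dF_zero dF hadd hmul
    | succ k ih => push_cast; rw [hadd]; simp [ih, dF_one dF hadd hmul]
  obtain ⟨k, hk | hk⟩ := Int.eq_nat_or_neg m <;> subst hk <;>
    push_cast <;> simp [hnat, hneg]

lemma dF_aeval_diffDer (u : F) (p : MvPolynomial ℕ ℤ) :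
    dF (aeval (fun j => dF^[j] u) p) = aeval (fun j => dF^[j] u) (diffDer p) := by
  induction p using MvPolynomial.induction_on with
  | C m => simp [dF_intCast dF hadd hmul]
  | add p q hp hq => simp [hadd, hp, hq]
  | mul_X p i hp =>
      rw [map_mul, hmul, hp, Derivation.leibniz, diffDer_X]
      simp only [map_add, map_mul, aeval_X, smul_eq_mul]
      have : dF (dF^[i] u) = dF^[i + 1] u := by
        rw [Function.iterate_succ_apply']
      rw [this]; ring

lemma iterate_dF_eq (y : F) (hy : y ≠ 0) (k : ℕ) :
    dF^[k] y = aeval (fun j => dF^[j] (dF y / y)) (Dpoly k) * y := by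
  set u := dF y / y with hu
  have hdy : dF y = u * y := by rw [hu, div_mul_cancel₀ _ hy]
  induction k with
  | zero => simp [Dpoly]
  | succ k ih =>
      rw [Function.iterate_succ_apply', ih, hmul,
        dF_aeval_diffDer dF hadd hmul, hdy]
      simp only [Dpoly, map_add, map_mul, aeval_X]
      have : dF^[0] u = u := rfl
      rw [this]; ring
end aux

/-- A nonzero `y` satisfies `y⁽ⁿ⁾ + a₁ y⁽ⁿ⁻¹⁾ + … + aₙ y = 0` (coefficients in `K`,
with the convention `a 0 = 1`) iff its logarithmic derivative `u = y'/y` satisfies the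
generalized Riccati equation `Dₙ(u) + a₁ Dₙ₋₁(u) + … + aₙ D₀(u) = 0`. -/
theorem linear_ode_iff_riccati
    {K F : Type*} [Field K] [Field F] [CharZero K] [Algebra K F]
    (dF : F → F)
    (hadd : ∀ a b, dF (a + b) = dF a + dF b)
    (hmul : ∀ a b, dF (a * b) = dF a * b + a * dF b)
    (n : ℕ) (a : ℕ → K) (ha0 : a 0 = 1)
    (y : F) (hy : y ≠ 0) :
    (∑ i ∈ Finset.range (n + 1), algebraMap K F (a i) * dF^[n - i] y = 0) ↔
    (∑ i ∈ Finset.range (n + 1), algebraMap K F (a i) *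
        MvPolynomial.aeval (fun j => dF^[j] (dF y / y)) (Dpoly (n - i)) = 0) := by
  have key : (∑ i ∈ Finset.range (n + 1), algebraMap K F (a i) * dF^[n - i] y) =
      (∑ i ∈ Finset.range (n + 1), algebraMap K F (a i) *
        MvPolynomial.aeval (fun j => dF^[j] (dF y / y)) (Dpoly (n - i))) * y := by
    rw [Finset.sum_mul]
    refine Finset.sum_congr rfl fun i _ => ?_
    rw [iterate_dF_eq dF hadd hmul y hy, mul_assoc]
  rw [key, mul_eq_zero]
  simp [hy]
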